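/- arXiv:1805.12333 — 2 statements merged into one kernel-verified Lean document; each statement's English description precedes it below -/
import Mathlib

section
/- Let P_XY be a probability distribution on 𝒳×𝒴 with P_XY(x,y) > 0 for all (x,y), with 𝒳-marginal P_X, and let E0 > 0. Define R_w*(E0) = min over all probability distributions Q_X on 𝒳 with D(Q_X‖P_X) ≤ E0 of [ Σ_x Q_X(x) ln(1/P_X(x)) ] − E0. Then the minimum over all joint probability distributions Q_XY on 𝒳×𝒴 of { D(Q_XY‖P_XY) + [ R_w*(E0) − H_Q(X|Y) ]_+ } equals the supremum over ρ ∈ [0,1] and λ > 0 of { −ln( Σ_y ( Σ_x P_XY(x,y)^{1/(1+ρ)} )^{1+ρ} ) − ρλ ln( Σ_x P_X(x)^{1+1/λ} ) − ρ(1+λ) E0 }. -/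
open Finset

/-- A probability distribution on a finite set: nonnegative and summing to 1. -/
def IsProb {α : Type*} [Fintype α] (Q : α → ℝ) : Prop :=
  (∀ a, 0 ≤ Q a) ∧ ∑ a, Q a = 1

/-- Kullback–Leibler divergence `D(Q‖P) = Σ_a Q(a) ln(Q(a)/P(a))`
(with the convention `0 · ln(0/p) = 0`, automatic since `Real.log 0 = 0`
and the term is multiplied by `Q a = 0`). -/
noncomputable def KL {α : Type*} [Fintype α] (Q P : α → ℝ) : ℝ :=
  ∑ a, Q a * Real.log (Q a / P a)

/-- Shannon entropy `H_Q(X) = -Σ_x Q(x) ln Q(x)` (with `0 ln 0 = 0`). -/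
noncomputable def entropy {α : Type*} [Fintype α] (Q : α → ℝ) : ℝ :=
  -∑ a, Q a * Real.log (Q a)

/-- The 𝒳-marginal of a joint distribution on `𝒳 × 𝒴`. -/
noncomputable def margX {𝒳 𝒴 : Type*} [Fintype 𝒴] (Q : 𝒳 × 𝒴 → ℝ) : 𝒳 → ℝ :=
  fun x => ∑ y, Q (x, y)

/-- The 𝒴-marginal of a joint distribution on `𝒳 × 𝒴`. -/
noncomputable def margY {𝒳 𝒴 : Type*} [Fintype 𝒳] (Q : 𝒳 × 𝒴 → ℝ) : 𝒴 → ℝ :=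
  fun y => ∑ x, Q (x, y)

/-- Conditional entropy `H_Q(X|Y) = -Σ_{x,y} Q(x,y) ln(Q(x,y)/Q_Y(y))` (with `0 ln 0 = 0`). -/
noncomputable def condEnt {𝒳 𝒴 : Type*} [Fintype 𝒳] [Fintype 𝒴] (Q : 𝒳 × 𝒴 → ℝ) : ℝ :=
  -∑ x, ∑ y, Q (x, y) * Real.log (Q (x, y) / margY Q y)

open Real Topology Filter

lemma gibbs {α : Type*} [Fintype α] (Q M : α → ℝ) (hQ : IsProb Q) (hM : ∀ a, 0 ≤ M a)
    (hdom : ∀ a, M a = 0 → Q a = 0) (hMpos : 0 < ∑ a, M a) :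
    -Real.log (∑ a, M a) ≤ ∑ a, Q a * Real.log (Q a / M a) := by
  set T := ∑ a, M a with hT
  have key : ∀ a, Q a - M a / T ≤ Q a * Real.log (Q a / M a) + Q a * Real.log T := by
    intro a
    rcases eq_or_lt_of_le (hQ.1 a) with h0 | hpos
    · simp only [← h0, zero_mul, add_zero, zero_sub, neg_nonpos]
      exact div_nonneg (hM a) hMpos.le
    · have hMa : 0 < M a := by
        rcases eq_or_lt_of_le (hM a) with h | h
        · exact absurd (hdom a h.symm) (ne_of_gt hpos)
        · exact h
      have harg : 0 < M a / (Q a * T) := by positivity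
      have h1 : Real.log (M a / (Q a * T)) ≤ M a / (Q a * T) - 1 :=
        Real.log_le_sub_one_of_pos harg
      have h2 : Q a * Real.log (M a / (Q a * T)) ≤ M a / T - Q a := by
        have := mul_le_mul_of_nonneg_left h1 (le_of_lt hpos)
        calc Q a * Real.log (M a / (Q a * T)) ≤ Q a * (M a / (Q a * T) - 1) := this
          _ = M a / T - Q a := by field_simp
      have hlog : Real.log (M a / (Q a * T)) = Real.log (M a) - Real.log (Q a) - Real.log T := by
        rw [Real.log_div (ne_of_gt hMa) (by positivity), Real.log_mul (ne_of_gt hpos) (ne_of_gt hMpos)]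
        ring
      have hlog2 : Real.log (Q a / M a) = Real.log (Q a) - Real.log (M a) :=
        Real.log_div (ne_of_gt hpos) (ne_of_gt hMa)
      nlinarith [h2, hlog, hlog2]
  have hsum : ∑ a, (Q a - M a / T) ≤ ∑ a, (Q a * Real.log (Q a / M a) + Q a * Real.log T) :=
    Finset.sum_le_sum (fun a _ => key a)
  have e1 : ∑ a, (Q a - M a / T) = 1 - 1 := by
    rw [Finset.sum_sub_distrib, hQ.2, ← Finset.sum_div]
    rw [div_self (ne_of_gt hMpos)]
  have e2 : ∑ a, (Q a * Real.log (Q a / M a) + Q a * Real.log T)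
      = (∑ a, Q a * Real.log (Q a / M a)) + Real.log T := by
    rw [Finset.sum_add_distrib, ← Finset.sum_mul, hQ.2, one_mul]
  rw [e1, e2] at hsum
  linarith

lemma holder2 {α : Type*} [Fintype α] (θ : ℝ) (hθ0 : 0 ≤ θ) (hθ1 : θ ≤ 1)
    (a b : α → ℝ) (ha : ∀ i, 0 ≤ a i) (hb : ∀ i, 0 ≤ b i) :
    ∑ i, a i ^ θ * b i ^ (1 - θ) ≤ (∑ i, a i) ^ θ * (∑ i, b i) ^ (1 - θ) := by
  rcases eq_or_lt_of_le hθ0 with h0 | h0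
  · simp [← h0]
  rcases eq_or_lt_of_le hθ1 with h1 | h1
  · simp [h1]
  set A := ∑ i, a i with hA
  set B := ∑ i, b i with hB
  have hA0 : 0 ≤ A := Finset.sum_nonneg fun i _ => ha i
  have hB0 : 0 ≤ B := Finset.sum_nonneg fun i _ => hb i
  rcases eq_or_lt_of_le hA0 with hA0' | hApos
  · have : ∀ i, a i = 0 := by
      intro i
      have := (Finset.sum_eq_zero_iff_of_nonneg (fun i _ => ha i)).1 hA0'.symm
      exact this i (Finset.mem_univ i)
    have : ∀ i, a i ^ θ * b i ^ (1-θ) = 0 := by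
      intro i; rw [this i, Real.zero_rpow (ne_of_gt h0), zero_mul]
    rw [Finset.sum_congr rfl (fun i _ => this i), Finset.sum_const_zero,
      ← hA0', Real.zero_rpow (ne_of_gt h0), zero_mul]
  rcases eq_or_lt_of_le hB0 with hB0' | hBpos
  · have : ∀ i, b i = 0 := by
      intro i
      have := (Finset.sum_eq_zero_iff_of_nonneg (fun i _ => hb i)).1 hB0'.symm
      exact this i (Finset.mem_univ i)
    have : ∀ i, a i ^ θ * b i ^ (1-θ) = 0 := by
      intro i; rw [this i, Real.zero_rpow (by linarith), mul_zero]
    rw [Finset.sum_congr rfl (fun i _ => this i), Finset.sum_const_zero,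
      ← hB0', Real.zero_rpow (by linarith : (1:ℝ) - θ ≠ 0), mul_zero]
  have key : ∀ i, a i ^ θ * b i ^ (1-θ) ≤ A ^ θ * B ^ (1-θ) * (θ * (a i / A) + (1-θ) * (b i / B)) := by
    intro i
    have hg := Real.geom_mean_le_arith_mean2_weighted (w₁ := θ) (w₂ := 1-θ)
      (p₁ := a i / A) (p₂ := b i / B) h0.le (by linarith)
      (div_nonneg (ha i) hA0) (div_nonneg (hb i) hB0) (by ring)
    have e : (a i / A) ^ θ * (b i / B) ^ (1-θ) = a i ^ θ * b i ^ (1-θ) / (A ^ θ * B ^ (1-θ)) := by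
      rw [Real.div_rpow (ha i) hA0, Real.div_rpow (hb i) hB0]
      field_simp
    rw [e] at hg
    have hpos : 0 < A ^ θ * B ^ (1-θ) := by positivity
    calc a i ^ θ * b i ^ (1-θ) = A ^ θ * B ^ (1-θ) * (a i ^ θ * b i ^ (1-θ) / (A ^ θ * B ^ (1-θ))) := by
          field_simp
      _ ≤ A ^ θ * B ^ (1-θ) * (θ * (a i / A) + (1-θ) * (b i / B)) :=
          mul_le_mul_of_nonneg_left hg (le_of_lt hpos)
  calc ∑ i, a i ^ θ * b i ^ (1-θ) ≤ ∑ i, A ^ θ * B ^ (1-θ) * (θ * (a i / A) + (1-θ) * (b i / B)) :=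
        Finset.sum_le_sum fun i _ => key i
    _ = A ^ θ * B ^ (1-θ) := by
        rw [← Finset.mul_sum]
        have : ∑ i, (θ * (a i / A) + (1-θ) * (b i / B)) = 1 := by
          rw [Finset.sum_add_distrib]
          rw [← Finset.mul_sum, ← Finset.mul_sum, ← Finset.sum_div, ← Finset.sum_div, ← hA, ← hB,
            div_self (ne_of_gt hApos), div_self (ne_of_gt hBpos)]
          ring
        rw [this, mul_one]


set_option linter.unusedSectionVars false

section tiltA

variable {𝒳 𝒴 : Type*} [Fintype 𝒳] [Nonempty 𝒳] [Fintype 𝒴] [Nonempty 𝒴]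

noncomputable def tA (P : 𝒳 × 𝒴 → ℝ) (ρ : ℝ) (x : 𝒳) (y : 𝒴) : ℝ :=
  Real.exp ((1/(1+ρ)) * Real.log (P (x, y)))

noncomputable def tS (P : 𝒳 × 𝒴 → ℝ) (ρ : ℝ) (y : 𝒴) : ℝ := ∑ x, tA P ρ x y

noncomputable def tB (P : 𝒳 × 𝒴 → ℝ) (ρ : ℝ) (y : 𝒴) : ℝ :=
  Real.exp ((1+ρ) * Real.log (tS P ρ y))

noncomputable def tZ (P : 𝒳 × 𝒴 → ℝ) (ρ : ℝ) : ℝ := ∑ y, tB P ρ y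

noncomputable def tQ (P : 𝒳 × 𝒴 → ℝ) (ρ : ℝ) : 𝒳 × 𝒴 → ℝ :=
  fun p => tA P ρ p.1 p.2 * Real.exp (ρ * Real.log (tS P ρ p.2)) / tZ P ρ

variable (P : 𝒳 × 𝒴 → ℝ) (ρ : ℝ)

lemma tApos (x : 𝒳) (y : 𝒴) : 0 < tA P ρ x y := Real.exp_pos _

lemma tSpos (y : 𝒴) : 0 < tS P ρ y :=
  Finset.sum_pos (fun x _ => tApos P ρ x y) Finset.univ_nonempty

lemma tBpos (y : 𝒴) : 0 < tB P ρ y := Real.exp_pos _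

lemma tZpos : 0 < tZ P ρ := Finset.sum_pos (fun y _ => tBpos P ρ y) Finset.univ_nonempty

lemma tQpos (p : 𝒳 × 𝒴) : 0 < tQ P ρ p :=
  div_pos (mul_pos (tApos P ρ _ _) (Real.exp_pos _)) (tZpos P ρ)

lemma margY_tQ : margY (tQ P ρ) = fun y => tB P ρ y / tZ P ρ := by
  funext y
  show ∑ x, tQ P ρ (x, y) = tB P ρ y / tZ P ρ
  have : ∀ x, tQ P ρ (x, y) = tA P ρ x y * (Real.exp (ρ * Real.log (tS P ρ y)) / tZ P ρ) := by
    intro x; simp [tQ]; ring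
  rw [Finset.sum_congr rfl fun x _ => this x, ← Finset.sum_mul]
  show tS P ρ y * (Real.exp (ρ * Real.log (tS P ρ y)) / tZ P ρ) = tB P ρ y / tZ P ρ
  have hSB : tS P ρ y * Real.exp (ρ * Real.log (tS P ρ y)) = tB P ρ y := by
    nth_rewrite 1 [← Real.exp_log (tSpos P ρ y)]
    rw [← Real.exp_add, tB]
    ring_nf
  rw [← mul_div_assoc, hSB]

lemma tQ_sum : ∑ p : 𝒳 × 𝒴, tQ P ρ p = 1 := by
  rw [Fintype.sum_prod_type]
  have h1 : ∀ y, ∑ x, tQ P ρ (x, y) = tB P ρ y / tZ P ρ := fun y =>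
    congrFun (margY_tQ P ρ) y
  rw [Finset.sum_comm]
  rw [Finset.sum_congr rfl fun y _ => h1 y, ← Finset.sum_div, ← tZ,
    div_self (ne_of_gt (tZpos P ρ))]

lemma tQ_isProb : IsProb (tQ P ρ) := ⟨fun p => (tQpos P ρ p).le, tQ_sum P ρ⟩

lemma log_tQ (p : 𝒳 × 𝒴) : Real.log (tQ P ρ p) =
    (1/(1+ρ)) * Real.log (P p) + ρ * Real.log (tS P ρ p.2) - Real.log (tZ P ρ) := by
  rw [tQ, Real.log_div (ne_of_gt (mul_pos (tApos P ρ p.1 p.2) (Real.exp_pos _))) (ne_of_gt (tZpos P ρ)),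
    Real.log_mul (ne_of_gt (tApos P ρ p.1 p.2)) (Real.exp_pos _).ne', tA, Real.log_exp,
    Real.log_exp]

lemma condEnt_tQ : condEnt (tQ P ρ) =
    -∑ x, ∑ y, tQ P ρ (x, y) * ((1/(1+ρ)) * Real.log (P (x, y)) - Real.log (tS P ρ y)) := by
  rw [condEnt]
  congr 1
  refine Finset.sum_congr rfl fun x _ => Finset.sum_congr rfl fun y _ => ?_
  congr 1
  rw [margY_tQ]
  rw [Real.log_div (ne_of_gt (tQpos P ρ (x, y))) (ne_of_gt (div_pos (tBpos P ρ y) (tZpos P ρ))),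
    log_tQ, Real.log_div (ne_of_gt (tBpos P ρ y)) (ne_of_gt (tZpos P ρ)), tB, Real.log_exp]
  show (1/(1+ρ)) * Real.log (P (x,y)) + ρ * Real.log (tS P ρ y) - Real.log (tZ P ρ)
      - ((1+ρ) * Real.log (tS P ρ y) - Real.log (tZ P ρ))
    = (1/(1+ρ)) * Real.log (P (x, y)) - Real.log (tS P ρ y)
  ring

lemma KL_tQ (hρ : 0 ≤ ρ) (hPpos : ∀ p, 0 < P p) :
    KL (tQ P ρ) P = ρ * condEnt (tQ P ρ) - Real.log (tZ P ρ) := by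
  have h1ρ : (1:ℝ) + ρ ≠ 0 := by positivity
  have key : ∀ p : 𝒳 × 𝒴, tQ P ρ p * Real.log (tQ P ρ p / P p)
      = -ρ * (tQ P ρ p * ((1/(1+ρ)) * Real.log (P p) - Real.log (tS P ρ p.2)))
        - tQ P ρ p * Real.log (tZ P ρ) := by
    intro p
    rw [Real.log_div (ne_of_gt (tQpos P ρ p)) (ne_of_gt (hPpos p)), log_tQ]
    have : (1/(1+ρ)) - 1 = -ρ * (1/(1+ρ)) := by field_simp; ring
    linear_combination tQ P ρ p * Real.log (P p) * this
  rw [KL, Finset.sum_congr rfl fun p _ => key p, Finset.sum_sub_distrib, ← Finset.sum_mul,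
    tQ_sum, one_mul, ← Finset.mul_sum, condEnt_tQ]
  rw [show ∑ p : 𝒳 × 𝒴, tQ P ρ p * ((1/(1+ρ)) * Real.log (P p) - Real.log (tS P ρ p.2))
      = ∑ x, ∑ y, tQ P ρ (x, y) * ((1/(1+ρ)) * Real.log (P (x, y)) - Real.log (tS P ρ y))
    from Fintype.sum_prod_type _]
  ring

lemma margY_sum_one (Q : 𝒳 × 𝒴 → ℝ) (hQ : IsProb Q) : ∑ y, margY Q y = 1 := by
  rw [← hQ.2, Fintype.sum_prod_type, Finset.sum_comm]
  rfl

lemma le_margY (Q : 𝒳 × 𝒴 → ℝ) (hQ : IsProb Q) (x : 𝒳) (y : 𝒴) : Q (x, y) ≤ margY Q y :=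
  Finset.single_le_sum (fun x' _ => hQ.1 (x', y)) (Finset.mem_univ x)

lemma weakA (hPpos : ∀ p, 0 < P p) (hρ0 : 0 ≤ ρ) (Q : 𝒳 × 𝒴 → ℝ) (hQ : IsProb Q) :
    -Real.log (tZ P ρ) ≤ KL Q P - ρ * condEnt Q := by
  have h1ρ : (0:ℝ) < 1 + ρ := by linarith
  set θ : ℝ := ρ / (1 + ρ) with hθ
  have hθ0 : 0 ≤ θ := div_nonneg hρ0 h1ρ.le
  have e1 : (1 + ρ) * (1 / (1 + ρ)) = 1 := by field_simp
  have e2 : (1 + ρ) * θ = ρ := by rw [hθ]; field_simp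
  have hθ1 : 1 - θ = 1 / (1 + ρ) := by rw [hθ]; field_simp; ring
  have hθle : θ ≤ 1 := by rw [hθ]; rw [div_le_one h1ρ]; linarith
  set M : 𝒳 × 𝒴 → ℝ := fun p => tA P ρ p.1 p.2 * margY Q p.2 ^ θ with hM
  have hQYnn : ∀ y, 0 ≤ margY Q y := fun y => Finset.sum_nonneg fun x _ => hQ.1 (x, y)
  have hMnn : ∀ p, 0 ≤ M p := fun p =>
    mul_nonneg (tApos P ρ p.1 p.2).le (Real.rpow_nonneg (hQYnn p.2) θ)
  have hdom : ∀ p, M p = 0 → Q p = 0 := by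
    intro p hMp
    rcases mul_eq_zero.1 hMp with h | h
    · exact absurd h (ne_of_gt (tApos P ρ p.1 p.2))
    · have hQY : margY Q p.2 = 0 := by
        by_contra hne
        have : (0:ℝ) < margY Q p.2 := lt_of_le_of_ne (hQYnn p.2) (Ne.symm hne)
        exact absurd h (ne_of_gt (Real.rpow_pos_of_pos this θ))
      have h1 := le_margY Q hQ p.1 p.2
      rw [Prod.mk.eta, hQY] at h1
      exact le_antisymm h1 (hQ.1 p)
  have hMpos : 0 < ∑ p : 𝒳 × 𝒴, M p := by
    obtain ⟨p0, hp0⟩ : ∃ p, 0 < Q p := by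
      by_contra hc
      push_neg at hc
      have : ∑ p : 𝒳 × 𝒴, Q p ≤ 0 := Finset.sum_nonpos fun p _ => hc p
      rw [hQ.2] at this; linarith
    refine Finset.sum_pos' (fun p _ => hMnn p) ⟨p0, Finset.mem_univ p0, ?_⟩
    have hQY : 0 < margY Q p0.2 := lt_of_lt_of_le hp0 (by
      simpa only [Prod.mk.eta] using le_margY Q hQ p0.1 p0.2)
    exact mul_pos (tApos P ρ p0.1 p0.2) (Real.rpow_pos_of_pos hQY θ)
  have hgibbs := gibbs Q M hQ hMnn hdom hMpos
  -- identity
  have term : ∀ p : 𝒳 × 𝒴, Q p * Real.log (Q p / P p)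
      + ρ * (Q p * Real.log (Q p / margY Q p.2))
      = (1 + ρ) * (Q p * Real.log (Q p / M p)) := by
    intro p
    rcases eq_or_lt_of_le (hQ.1 p) with h0 | hp
    · rw [← h0]; simp
    · have hQY : 0 < margY Q p.2 := lt_of_lt_of_le hp (by
        simpa only [Prod.mk.eta] using le_margY Q hQ p.1 p.2)
      have hMpp : 0 < M p := mul_pos (tApos P ρ p.1 p.2) (Real.rpow_pos_of_pos hQY θ)
      have l1 : Real.log (Q p / P p) = Real.log (Q p) - Real.log (P p) :=
        Real.log_div (ne_of_gt hp) (ne_of_gt (hPpos p))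
      have l2 : Real.log (Q p / margY Q p.2) = Real.log (Q p) - Real.log (margY Q p.2) :=
        Real.log_div (ne_of_gt hp) (ne_of_gt hQY)
      have l3 : Real.log (Q p / M p) = Real.log (Q p)
          - ((1/(1+ρ)) * Real.log (P p) + θ * Real.log (margY Q p.2)) := by
        rw [Real.log_div (ne_of_gt hp) (ne_of_gt hMpp), hM]
        rw [Real.log_mul (ne_of_gt (tApos P ρ p.1 p.2))
          (ne_of_gt (Real.rpow_pos_of_pos hQY θ)), tA, Real.log_exp,
          Real.log_rpow hQY]
      rw [l1, l2, l3]
      linear_combination (Q p * Real.log (P p)) * e1 + (Q p * Real.log (margY Q p.2)) * e2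
  have hid : KL Q P - ρ * condEnt Q = (1 + ρ) * ∑ p : 𝒳 × 𝒴, Q p * Real.log (Q p / M p) := by
    have hce : condEnt Q = -∑ p : 𝒳 × 𝒴, Q p * Real.log (Q p / margY Q p.2) := by
      rw [condEnt]
      congr 1
      rw [Fintype.sum_prod_type]
    calc KL Q P - ρ * condEnt Q
        = ∑ p : 𝒳 × 𝒴, (Q p * Real.log (Q p / P p)
            + ρ * (Q p * Real.log (Q p / margY Q p.2))) := by
          rw [hce, KL, Finset.sum_add_distrib]
          rw [show ∑ p : 𝒳 × 𝒴, ρ * (Q p * Real.log (Q p / margY Q p.2))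
            = ρ * ∑ p : 𝒳 × 𝒴, Q p * Real.log (Q p / margY Q p.2) from (Finset.mul_sum _ _ _).symm]
          ring
      _ = ∑ p : 𝒳 × 𝒴, (1 + ρ) * (Q p * Real.log (Q p / M p)) :=
          Finset.sum_congr rfl fun p _ => term p
      _ = (1 + ρ) * ∑ p : 𝒳 × 𝒴, Q p * Real.log (Q p / M p) := (Finset.mul_sum _ _ _).symm
  -- Hölder bound on ∑ M
  have hMsum : ∑ p : 𝒳 × 𝒴, M p ≤ Real.exp ((1/(1+ρ)) * Real.log (tZ P ρ)) := by
    have hswap : ∑ p : 𝒳 × 𝒴, M p = ∑ y, margY Q y ^ θ * tS P ρ y := by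
      rw [Fintype.sum_prod_type, Finset.sum_comm]
      refine Finset.sum_congr rfl fun y _ => ?_
      rw [tS, Finset.mul_sum]
      exact Finset.sum_congr rfl fun x _ => by simp only [hM]; ring
    have hb : ∀ y, tB P ρ y ^ (1 - θ) = tS P ρ y := by
      intro y
      rw [hθ1, tB, ← Real.exp_log (x := Real.exp ((1+ρ) * Real.log (tS P ρ y)) ^ (1/(1+ρ)))
        (Real.rpow_pos_of_pos (Real.exp_pos _) _), Real.log_rpow (Real.exp_pos _), Real.log_exp]
      rw [show (1/(1+ρ)) * ((1+ρ) * Real.log (tS P ρ y)) = ((1+ρ) * (1/(1+ρ))) * Real.log (tS P ρ y) by ring,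
        e1, one_mul, Real.exp_log (tSpos P ρ y)]
    have hh := holder2 θ hθ0 hθle (fun y => margY Q y) (fun y => tB P ρ y)
      hQYnn (fun y => (tBpos P ρ y).le)
    rw [margY_sum_one Q hQ, Real.one_rpow, one_mul] at hh
    calc ∑ p : 𝒳 × 𝒴, M p = ∑ y, margY Q y ^ θ * tS P ρ y := hswap
      _ = ∑ y, margY Q y ^ θ * tB P ρ y ^ (1 - θ) :=
          Finset.sum_congr rfl fun y _ => by rw [hb y]
      _ ≤ (∑ y, tB P ρ y) ^ (1 - θ) := hh
      _ = Real.exp ((1/(1+ρ)) * Real.log (tZ P ρ)) := by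
          rw [← tZ, hθ1, Real.rpow_def_of_pos (tZpos P ρ)]
          ring_nf
  -- combine
  have hlog : Real.log (∑ p : 𝒳 × 𝒴, M p) ≤ (1/(1+ρ)) * Real.log (tZ P ρ) := by
    calc Real.log (∑ p : 𝒳 × 𝒴, M p) ≤ Real.log (Real.exp ((1/(1+ρ)) * Real.log (tZ P ρ))) :=
          Real.log_le_log hMpos hMsum
      _ = (1/(1+ρ)) * Real.log (tZ P ρ) := Real.log_exp _
  have h4 : -((1/(1+ρ)) * Real.log (tZ P ρ)) ≤ ∑ p : 𝒳 × 𝒴, Q p * Real.log (Q p / M p) := by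
    linarith
  have h5 := mul_le_mul_of_nonneg_left h4 h1ρ.le
  rw [hid]
  calc -Real.log (tZ P ρ) = (1 + ρ) * -((1/(1+ρ)) * Real.log (tZ P ρ)) := by
        field_simp
      _ ≤ (1 + ρ) * ∑ p : 𝒳 × 𝒴, Q p * Real.log (Q p / M p) := h5

lemma tQ_zero (hP : IsProb P) (hPpos : ∀ p, 0 < P p) : tQ P 0 = P := by
  have hA : ∀ x y, tA P 0 x y = P (x, y) := by
    intro x y
    rw [tA]
    norm_num
    exact Real.exp_log (hPpos (x, y))
  have hS : ∀ y, tS P 0 y = margY P y := by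
    intro y
    rw [tS, margY]
    exact Finset.sum_congr rfl fun x _ => hA x y
  have hZ : tZ P 0 = 1 := by
    rw [tZ]
    have : ∀ y, tB P 0 y = margY P y := by
      intro y
      rw [tB, hS]
      norm_num
      exact Real.exp_log (Finset.sum_pos (fun x _ => hPpos (x, y)) Finset.univ_nonempty)
    rw [Finset.sum_congr rfl fun y _ => this y]
    exact margY_sum_one P hP
  funext p
  rw [tQ, hZ, hA]
  norm_num

lemma contCondEnt (hPpos : ∀ p, 0 < P p) :
    ContinuousOn (fun ρ => condEnt (tQ P ρ)) (Set.Icc (0:ℝ) 1) := by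
  set s : Set ℝ := Set.Icc 0 1 with hs
  have hne : ∀ ρ ∈ s, (1:ℝ) + ρ ≠ 0 := by
    intro ρ hρ
    have := hρ.1
    intro h; linarith
  have hc1 : ContinuousOn (fun ρ => 1/(1+ρ)) s :=
    ContinuousOn.div continuousOn_const
      ((continuous_const.add continuous_id).continuousOn) hne
  have htA : ∀ x y, ContinuousOn (fun ρ => tA P ρ x y) s := by
    intro x y
    exact Real.continuous_exp.comp_continuousOn (hc1.mul continuousOn_const)
  have htS : ∀ y, ContinuousOn (fun ρ => tS P ρ y) s := by
    intro y
    exact continuousOn_finset_sum _ fun x _ => htA x y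
  have hlogS : ∀ y, ContinuousOn (fun ρ => Real.log (tS P ρ y)) s := fun y =>
    (htS y).log fun ρ _ => (tSpos P ρ y).ne'
  have htB : ∀ y, ContinuousOn (fun ρ => tB P ρ y) s := fun y =>
    Real.continuous_exp.comp_continuousOn
      (((continuous_const.add continuous_id).continuousOn).mul (hlogS y))
  have htZ : ContinuousOn (fun ρ => tZ P ρ) s :=
    continuousOn_finset_sum _ fun y _ => htB y
  have htQ : ∀ x y, ContinuousOn (fun ρ => tQ P ρ (x, y)) s := by
    intro x y
    exact ((htA x y).mul (Real.continuous_exp.comp_continuousOn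
      ((continuousOn_id.mul (hlogS y))))).div htZ fun ρ _ => (tZpos P ρ).ne'
  have hrw : (fun ρ => condEnt (tQ P ρ))
      = fun ρ => -∑ x, ∑ y, tQ P ρ (x, y) * ((1/(1+ρ)) * Real.log (P (x, y)) - Real.log (tS P ρ y)) :=
    funext fun ρ => condEnt_tQ P ρ
  rw [hrw]
  apply ContinuousOn.neg
  apply continuousOn_finset_sum
  intro x _
  apply continuousOn_finset_sum
  intro y _
  exact (htQ x y).mul ((hc1.mul continuousOn_const).sub (hlogS y))

end tiltA

section tiltB

variable {𝒳 : Type*} [Fintype 𝒳] [Nonempty 𝒳]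

noncomputable def bZ (W : 𝒳 → ℝ) (s : ℝ) : ℝ := ∑ x, Real.exp ((1+s) * Real.log (W x))

noncomputable def bQ (W : 𝒳 → ℝ) (s : ℝ) : 𝒳 → ℝ :=
  fun x => Real.exp ((1+s) * Real.log (W x)) / bZ W s

variable (W : 𝒳 → ℝ) (s : ℝ)

lemma bZpos : 0 < bZ W s := Finset.sum_pos (fun x _ => Real.exp_pos _) Finset.univ_nonempty

lemma bQpos (x : 𝒳) : 0 < bQ W s x := div_pos (Real.exp_pos _) (bZpos W s)

lemma bQ_isProb : IsProb (bQ W s) := by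
  constructor
  · exact fun x => (bQpos W s x).le
  · rw [show ∑ x, bQ W s x = (∑ x, Real.exp ((1+s) * Real.log (W x))) / bZ W s from by
      rw [Finset.sum_div]; rfl]
    rw [← bZ, div_self (ne_of_gt (bZpos W s))]

lemma bQ_zero (hW : ∀ x, 0 < W x) (hWsum : ∑ x, W x = 1) : bQ W 0 = W := by
  have h : ∀ x, Real.exp ((1+(0:ℝ)) * Real.log (W x)) = W x := by
    intro x; norm_num; exact Real.exp_log (hW x)
  funext x
  rw [bQ, bZ, Finset.sum_congr rfl fun x _ => h x, hWsum, h x, div_one]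

lemma log_bQ (x : 𝒳) : Real.log (bQ W s x) = (1+s) * Real.log (W x) - Real.log (bZ W s) := by
  rw [bQ, Real.log_div (Real.exp_pos _).ne' (ne_of_gt (bZpos W s)), Real.log_exp]

lemma bZ_rpow (W : 𝒳 → ℝ) (hW : ∀ x, 0 < W x) (l : ℝ) :
    ∑ x, W x ^ (1 + 1/l) = bZ W (1/l) := by
  refine Finset.sum_congr rfl fun x _ => ?_
  rw [Real.rpow_def_of_pos (hW x), mul_comm]

lemma KL_bQ_zero (hW : ∀ x, 0 < W x) (hWsum : ∑ x, W x = 1) : KL (bQ W 0) W = 0 := by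
  rw [bQ_zero W hW hWsum, KL]
  refine Finset.sum_eq_zero fun x _ => ?_
  rw [div_self (ne_of_gt (hW x)), Real.log_one, mul_zero]

lemma contKL_bQ (hW : ∀ x, 0 < W x) : Continuous fun s => KL (bQ W s) W := by
  have hbZ : Continuous fun s => bZ W s := by
    apply continuous_finset_sum
    intro x _
    exact Real.continuous_exp.comp ((continuous_const.add continuous_id).mul continuous_const)
  have hbQ : ∀ x, Continuous fun s => bQ W s x := by
    intro x
    exact (Real.continuous_exp.comp
      ((continuous_const.add continuous_id).mul continuous_const)).div hbZ
      fun s => (bZpos W s).ne'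
  have hrw : (fun s => KL (bQ W s) W)
      = fun s => ∑ x, (bQ W s x * Real.log (bQ W s x) - bQ W s x * Real.log (W x)) := by
    funext s
    rw [KL]
    refine Finset.sum_congr rfl fun x _ => ?_
    rw [Real.log_div (bQpos W s x).ne' (hW x).ne']
    ring
  rw [hrw]
  apply continuous_finset_sum
  intro x _
  exact (Real.continuous_mul_log.comp (hbQ x)).sub ((hbQ x).mul continuous_const)

-- identity: if KL (bQ W s) W = E0 with s > 0 then the primal value equals the dual value
lemma bQ_dual_eq (hW : ∀ x, 0 < W x) (E0 : ℝ) (hs : 0 < s)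
    (hKL : KL (bQ W s) W = E0) :
    (∑ x, bQ W s x * Real.log (1 / W x)) - E0
      = -(1/s) * Real.log (bZ W s) - (1 + 1/s) * E0 := by
  set T := ∑ x, bQ W s x * Real.log (W x) with hTdef
  have hT : KL (bQ W s) W = s * T - Real.log (bZ W s) := by
    rw [KL]
    have hterm : ∀ x : 𝒳, bQ W s x * Real.log (bQ W s x / W x)
        = s * (bQ W s x * Real.log (W x)) - bQ W s x * Real.log (bZ W s) := by
      intro x
      rw [Real.log_div (bQpos W s x).ne' (hW x).ne', log_bQ]
      ring
    rw [Finset.sum_congr rfl fun x _ => hterm x, Finset.sum_sub_distrib, ← Finset.mul_sum,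
      ← Finset.sum_mul, (bQ_isProb W s).2, one_mul, hTdef]
  have hobj : ∑ x, bQ W s x * Real.log (1 / W x) = -T := by
    have hterm : ∀ x : 𝒳, bQ W s x * Real.log (1 / W x) = -(bQ W s x * Real.log (W x)) := by
      intro x
      rw [one_div, Real.log_inv]
      ring
    rw [Finset.sum_congr rfl fun x _ => hterm x, Finset.sum_neg_distrib, hTdef]
  have hE : E0 = s * T - Real.log (bZ W s) := by rw [← hKL, hT]
  have hs1 : (1/s) * s = 1 := by field_simp
  rw [hobj]
  linear_combination (1/s) * hE + T * hs1

lemma weakB (hW : ∀ x, 0 < W x) (E0 l : ℝ) (hl : 0 < l)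
    (Q : 𝒳 → ℝ) (hQ : IsProb Q) (hKL : KL Q W ≤ E0) :
    -l * Real.log (bZ W (1/l)) - (1+l)*E0 ≤ (∑ x, Q x * Real.log (1/W x)) - E0 := by
  set M : 𝒳 → ℝ := fun x => Real.exp ((1+1/l) * Real.log (W x)) with hM
  have hMsum : ∑ x, M x = bZ W (1/l) := rfl
  have hg : -Real.log (bZ W (1/l)) ≤ ∑ x, Q x * Real.log (Q x / M x) := by
    rw [← hMsum]
    exact gibbs Q M hQ (fun x => (Real.exp_pos _).le)
      (fun x h => absurd h (Real.exp_pos _).ne') (by rw [hMsum]; exact bZpos W (1/l))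
  have hl1 : l * (1/l) = 1 := by field_simp
  have hident : ∑ x, Q x * Real.log (1/W x) + l * KL Q W
      = l * ∑ x, Q x * Real.log (Q x / M x) := by
    rw [KL, Finset.mul_sum, Finset.mul_sum, ← Finset.sum_add_distrib]
    refine Finset.sum_congr rfl fun x _ => ?_
    rcases eq_or_lt_of_le (hQ.1 x) with h0 | hx
    · rw [← h0]; ring
    · rw [one_div, Real.log_inv, Real.log_div hx.ne' (hW x).ne',
        Real.log_div hx.ne' (Real.exp_pos _).ne', Real.log_exp]
      linear_combination (Q x * Real.log (W x)) * hl1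
  have h2 : l * KL Q W ≤ l * E0 := mul_le_mul_of_nonneg_left hKL hl.le
  have h3 := mul_le_mul_of_nonneg_left hg hl.le
  nlinarith [h2, h3, hident]

open Classical in
noncomputable def pmax (W : 𝒳 → ℝ) : ℝ := Finset.univ.sup' Finset.univ_nonempty W

open Classical in
noncomputable def mset (W : 𝒳 → ℝ) : Finset 𝒳 := Finset.univ.filter (fun x => W x = pmax W)

open Classical in
noncomputable def bQm (W : 𝒳 → ℝ) : 𝒳 → ℝ :=
  fun x => if W x = pmax W then 1/((mset W).card : ℝ) else 0

lemma pmax_le (x : 𝒳) : W x ≤ pmax W := Finset.le_sup' W (Finset.mem_univ x)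

lemma pmax_mem : ∃ x, W x = pmax W := by
  obtain ⟨x, _, h⟩ := Finset.exists_mem_eq_sup' Finset.univ_nonempty W
  exact ⟨x, h.symm⟩

lemma pmax_pos (hW : ∀ x, 0 < W x) : 0 < pmax W := by
  obtain ⟨x, h⟩ := pmax_mem W
  rw [← h]; exact hW x

lemma mem_mset {W : 𝒳 → ℝ} {x : 𝒳} : x ∈ mset W ↔ W x = pmax W := by simp [mset]

lemma mset_card_pos : 0 < ((mset W).card : ℝ) := by
  obtain ⟨x, h⟩ := pmax_mem W
  have := Finset.card_pos.2 ⟨x, mem_mset.2 h⟩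
  exact_mod_cast this

lemma bQm_eq_zero {W : 𝒳 → ℝ} {x : 𝒳} (h : ¬ W x = pmax W) : bQm W x = 0 := if_neg h

lemma bQm_eq {W : 𝒳 → ℝ} {x : 𝒳} (h : W x = pmax W) :
    bQm W x = 1/((mset W).card : ℝ) := if_pos h

lemma sum_bQm_weight (f : 𝒳 → ℝ) :
    ∑ x, bQm W x * f x
      = ∑ x ∈ mset W, (1/((mset W).card : ℝ)) * f x := by
  rw [← Finset.sum_subset (Finset.subset_univ (mset W))
    (fun x _ hx => by rw [bQm_eq_zero (fun h => hx (mem_mset.2 h)), zero_mul])]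
  exact Finset.sum_congr rfl fun x hx => by rw [bQm_eq (mem_mset.1 hx)]

lemma bQm_sum : ∑ x, bQm W x = 1 := by
  have h := sum_bQm_weight W (fun _ => 1)
  simp only [mul_one] at h
  rw [h, Finset.sum_const, nsmul_eq_mul, mul_one_div, div_self (mset_card_pos W).ne']

lemma bQm_isProb : IsProb (bQm W) := by
  refine ⟨fun x => ?_, bQm_sum W⟩
  rw [bQm]
  split
  · positivity
  · exact le_refl 0

lemma KL_bQm (hW : ∀ x, 0 < W x) :
    KL (bQm W) W = -Real.log (((mset W).card : ℝ) * pmax W) := by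
  set m : ℝ := ((mset W).card : ℝ) with hm
  have hmpos := mset_card_pos W
  have hpm := pmax_pos W hW
  have h1 : KL (bQm W) W = ∑ x, bQm W x * Real.log (bQm W x / W x) := rfl
  have h2 : ∀ x ∈ mset W, (1/m) * Real.log (bQm W x / W x)
      = (1/m) * Real.log (1 / (m * pmax W)) := by
    intro x hx
    rw [bQm_eq (mem_mset.1 hx), (mem_mset.1 hx), ← hm]
    congr 1
    rw [div_div]
  have h3 : ∑ x, bQm W x * Real.log (bQm W x / W x)
      = ∑ x ∈ mset W, (1/m) * Real.log (bQm W x / W x) := by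
    have := sum_bQm_weight W (fun x => Real.log (bQm W x / W x))
    rw [← hm] at this
    exact this
  rw [h1, h3, Finset.sum_congr rfl h2, Finset.sum_const, nsmul_eq_mul,
    one_div (m * pmax W), Real.log_inv, ← hm]
  have e : m * (1/m) = 1 := by field_simp; exact div_self hmpos.ne'
  linear_combination (-Real.log (m * pmax W)) * e

lemma obj_bQm (hW : ∀ x, 0 < W x) :
    ∑ x, bQm W x * Real.log (1 / W x) = -Real.log (pmax W) := by
  set m : ℝ := ((mset W).card : ℝ) with hm
  have hmpos := mset_card_pos W
  have h2 : ∀ x ∈ mset W, (1/m) * Real.log (1 / W x)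
      = (1/m) * -Real.log (pmax W) := by
    intro x hx
    rw [(mem_mset.1 hx), one_div (pmax W), Real.log_inv]
  have h3 := sum_bQm_weight W (fun x => Real.log (1 / W x))
  rw [← hm] at h3
  rw [h3, Finset.sum_congr rfl h2, Finset.sum_const, nsmul_eq_mul, ← hm]
  have e : m * (1/m) = 1 := by field_simp; exact div_self hmpos.ne'
  linear_combination (-Real.log (pmax W)) * e

open Filter in
lemma bQ_tendsto (hW : ∀ x, 0 < W x) (x : 𝒳) :
    Tendsto (fun s => bQ W s x) atTop (𝓝 (bQm W x)) := by
  set c := Real.log (pmax W) with hc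
  set num : ℝ → 𝒳 → ℝ := fun s x' => Real.exp ((1+s) * (Real.log (W x') - c)) with hnum
  set den : ℝ → ℝ := fun s => ∑ x', num s x' with hden
  have hdenpos : ∀ s, 0 < den s :=
    fun s => Finset.sum_pos (fun x' _ => Real.exp_pos _) Finset.univ_nonempty
  have hrw : ∀ s, bQ W s x = num s x / den s := by
    intro s
    have h1 : ∀ x', num s x' = Real.exp ((1+s) * Real.log (W x')) / Real.exp ((1+s) * c) := by
      intro x'
      simp only [hnum]
      rw [mul_sub, Real.exp_sub]
    have hds : den s = bZ W s / Real.exp ((1+s)*c) := by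
      simp only [hden]
      rw [Finset.sum_congr rfl fun x' _ => h1 x', ← Finset.sum_div, ← bZ]
    have haux : ∀ (a b d : ℝ), d ≠ 0 → b ≠ 0 → a / b = (a / d) / (b / d) := by
      intros a b d hd hb
      field_simp
    rw [bQ, hds, h1 x]
    exact haux _ _ _ (Real.exp_pos _).ne' (bZpos W s).ne'
  have hlim1 : ∀ x', Tendsto (fun s => num s x') atTop
      (𝓝 (if W x' = pmax W then 1 else 0)) := by
    intro x'
    by_cases h : W x' = pmax W
    · rw [if_pos h]
      have : (fun s => num s x') = fun _ => 1 := by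
        funext s
        show Real.exp ((1 + s) * (Real.log (W x') - c)) = 1
        rw [hc, ← h, sub_self, mul_zero, Real.exp_zero]
      rw [this]
      exact tendsto_const_nhds
    · rw [if_neg h]
      have hd : Real.log (W x') - c < 0 := by
        rw [hc, sub_neg]
        exact Real.log_lt_log (hW x') (lt_of_le_of_ne (pmax_le W x') h)
      have h1 : Tendsto (fun s : ℝ => 1 + s) atTop atTop :=
        tendsto_atTop_add_const_left _ 1 tendsto_id
      have h2 : Tendsto (fun s : ℝ => (1+s) * (Real.log (W x') - c)) atTop atBot :=
        Tendsto.atTop_mul_const_of_neg hd h1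
      exact Real.tendsto_exp_atBot.comp h2
  have hsumite : ∑ x', (if W x' = pmax W then (1:ℝ) else 0) = ((mset W).card : ℝ) := by
    rw [← Finset.sum_subset (Finset.subset_univ (mset W))
      (fun x' _ hx' => by rw [if_neg (fun h => hx' (mem_mset.2 h))])]
    rw [Finset.sum_congr rfl fun x' hx' => if_pos (mem_mset.1 hx'), Finset.sum_const,
      nsmul_eq_mul, mul_one]
  have hlimden : Tendsto den atTop (𝓝 ((mset W).card : ℝ)) := by
    rw [← hsumite]
    exact tendsto_finset_sum _ fun x' _ => hlim1 x'
  have := Tendsto.div (hlim1 x) hlimden (mset_card_pos W).ne'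
  have heq : (if W x = pmax W then (1:ℝ) else 0) / ((mset W).card : ℝ) = bQm W x := by
    by_cases h : W x = pmax W
    · rw [if_pos h, bQm_eq h, one_div]
    · rw [if_neg h, bQm_eq_zero h, zero_div]
  rw [heq] at this
  exact this.congr fun s => (hrw s).symm

lemma KL_expand (Q : 𝒳 → ℝ) (hQ0 : ∀ x, 0 ≤ Q x) (hW : ∀ x, 0 < W x) :
    KL Q W = ∑ x, (Q x * Real.log (Q x) - Q x * Real.log (W x)) := by
  rw [KL]
  refine Finset.sum_congr rfl fun x _ => ?_
  rcases eq_or_lt_of_le (hQ0 x) with h0 | hx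
  · rw [← h0]; ring
  · rw [Real.log_div hx.ne' (hW x).ne']; ring

open Filter in
lemma KL_bQ_tendsto (hW : ∀ x, 0 < W x) :
    Tendsto (fun s => KL (bQ W s) W) atTop (𝓝 (KL (bQm W) W)) := by
  have hrw : (fun s => KL (bQ W s) W)
      = fun s => ∑ x, (bQ W s x * Real.log (bQ W s x) - bQ W s x * Real.log (W x)) :=
    funext fun s => KL_expand W (bQ W s) (fun x => (bQpos W s x).le) hW
  rw [hrw, KL_expand W (bQm W) (bQm_isProb W).1 hW]
  apply tendsto_finset_sum
  intro x _
  exact ((Real.continuous_mul_log.tendsto _).comp (bQ_tendsto W hW x)).sub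
    ((bQ_tendsto W hW x).mul tendsto_const_nhds)

open Filter in
lemma bQm_feasible (hW : ∀ x, 0 < W x) (hWsum : ∑ x, W x = 1) (E0 : ℝ) (hE0 : 0 < E0)
    (hno : ∀ s, 0 < s → KL (bQ W s) W ≠ E0) : KL (bQm W) W ≤ E0 := by
  have hlt : ∀ s, 0 ≤ s → KL (bQ W s) W < E0 := by
    intro s hs
    by_contra hge
    push_neg at hge
    have hc : ContinuousOn (fun t => KL (bQ W t) W) (Set.Icc 0 s) :=
      (contKL_bQ W hW).continuousOn
    have hmem : E0 ∈ Set.Icc (KL (bQ W 0) W) (KL (bQ W s) W) := by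
      rw [KL_bQ_zero W hW hWsum]
      exact ⟨hE0.le, hge⟩
    obtain ⟨t, ht, hteq⟩ := intermediate_value_Icc hs hc hmem
    have ht0 : 0 < t := by
      rcases eq_or_lt_of_le ht.1 with h | h
      · exfalso
        have hteq' : KL (bQ W 0) W = E0 := by rw [h]; exact hteq
        rw [KL_bQ_zero W hW hWsum] at hteq'
        linarith
      · exact h
    exact hno t ht0 hteq
  exact le_of_tendsto (KL_bQ_tendsto W hW)
    (Filter.eventually_atTop.2 ⟨0, fun s hs => (hlt s hs).le⟩)

lemma dual_near (hW : ∀ x, 0 < W x) (E0 ε : ℝ) (hε : 0 < ε) :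
    ∃ l, 0 < l ∧ -Real.log (pmax W) - E0 - ε
      ≤ -l * Real.log (bZ W (1/l)) - (1+l)*E0 := by
  set N : ℝ := (Fintype.card 𝒳 : ℝ) with hN
  have hNpos : 0 < N := by
    rw [hN]
    exact_mod_cast Fintype.card_pos
  set c := Real.log N + Real.log (pmax W) + E0 with hcdef
  refine ⟨ε/(|c|+1), by positivity, ?_⟩
  set l := ε/(|c|+1) with hl_def
  have hl : 0 < l := by positivity
  have hm : l * (1/l) = 1 := by field_simp
  have hbound : Real.log (bZ W (1/l)) ≤ Real.log N + (1+1/l) * Real.log (pmax W) := by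
    have h1 : bZ W (1/l) ≤ N * Real.exp ((1+1/l) * Real.log (pmax W)) := by
      rw [bZ]
      calc ∑ x, Real.exp ((1+1/l) * Real.log (W x))
          ≤ ∑ _x : 𝒳, Real.exp ((1+1/l) * Real.log (pmax W)) := by
            refine Finset.sum_le_sum fun x _ => ?_
            refine Real.exp_le_exp.2 (mul_le_mul_of_nonneg_left ?_ (by positivity))
            exact Real.log_le_log (hW x) (pmax_le W x)
        _ = N * Real.exp ((1+1/l) * Real.log (pmax W)) := by
            rw [Finset.sum_const, Finset.card_univ, nsmul_eq_mul, hN]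
    calc Real.log (bZ W (1/l)) ≤ Real.log (N * Real.exp ((1+1/l) * Real.log (pmax W))) :=
          Real.log_le_log (bZpos W (1/l)) h1
      _ = Real.log N + (1+1/l) * Real.log (pmax W) := by
          rw [Real.log_mul hNpos.ne' (Real.exp_pos _).ne', Real.log_exp]
  have h2 : -l * Real.log (bZ W (1/l)) ≥ -l * Real.log N - (l+1) * Real.log (pmax W) := by
    have h7 := mul_le_mul_of_nonneg_left hbound hl.le
    have e : l * ((1+1/l) * Real.log (pmax W)) = (l+1) * Real.log (pmax W) := by
      linear_combination (Real.log (pmax W)) * hm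
    nlinarith [h7, e]
  have h4 : l * c ≤ ε := by
    have h5 : l * c ≤ l * |c| := mul_le_mul_of_nonneg_left (le_abs_self c) hl.le
    have h6 : l * |c| ≤ ε := by
      rw [hl_def]
      rw [div_mul_eq_mul_div, mul_comm]
      rw [div_le_iff₀ (by positivity)]
      nlinarith [abs_nonneg c]
    linarith
  rw [hcdef] at h4
  nlinarith [h2, h4]

end tiltB

lemma KL_self {α : Type*} [Fintype α] (Q : α → ℝ) (hQ : ∀ a, 0 < Q a) : KL Q Q = 0 := by
  rw [KL]
  refine Finset.sum_eq_zero fun a _ => ?_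
  rw [div_self (hQ a).ne', Real.log_one, mul_zero]


section glue

variable {𝒳 𝒴 : Type*} [Fintype 𝒳] [Nonempty 𝒳] [Fintype 𝒴] [Nonempty 𝒴]
variable (P : 𝒳 × 𝒴 → ℝ)

lemma margX_pos (hPpos : ∀ p, 0 < P p) (x : 𝒳) : 0 < margX P x :=
  Finset.sum_pos (fun y _ => hPpos (x, y)) Finset.univ_nonempty

lemma margX_isProb (hP : IsProb P) : IsProb (margX P) := by
  constructor
  · exact fun x => (Finset.sum_nonneg fun y _ => hP.1 (x, y))
  · rw [show ∑ x, margX P x = ∑ x, ∑ y, P (x, y) from rfl, ← Fintype.sum_prod_type, hP.2]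

lemma tZ_eq (hPpos : ∀ p, 0 < P p) (r : ℝ) :
    ∑ y, (∑ x, P (x, y) ^ (1 / (1 + r))) ^ (1 + r) = tZ P r := by
  have hin : ∀ y, ∑ x, P (x, y) ^ (1 / (1 + r)) = tS P r y := by
    intro y
    refine Finset.sum_congr rfl fun x _ => ?_
    rw [Real.rpow_def_of_pos (hPpos (x, y)), mul_comm, tA]
  rw [tZ]
  refine Finset.sum_congr rfl fun y _ => ?_
  rw [hin y, Real.rpow_def_of_pos (tSpos P r y), mul_comm, tB]

end glue

/-- Gallager-style form of the fixed-rate FR–FA trade-off function,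
with the optimal rate `R_w*(E0)` substituted. -/
theorem stmt_10 {𝒳 𝒴 : Type*} [Fintype 𝒳] [Nonempty 𝒳] [Fintype 𝒴] [Nonempty 𝒴]
    (P : 𝒳 × 𝒴 → ℝ) (hP : IsProb P) (hPpos : ∀ p, 0 < P p)
    (E0 : ℝ) (hE0 : 0 < E0) :
    sInf {v | ∃ Q : 𝒳 × 𝒴 → ℝ, IsProb Q ∧
        v = KL Q P +
          max ((sInf {u | ∃ QX : 𝒳 → ℝ, IsProb QX ∧ KL QX (margX P) ≤ E0 ∧
                  u = (∑ x, QX x * Real.log (1 / margX P x)) - E0})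
                - condEnt Q) 0}
      = sSup {v | ∃ r l : ℝ, 0 ≤ r ∧ r ≤ 1 ∧ 0 < l ∧
          v = -Real.log (∑ y, (∑ x, P (x, y) ^ (1 / (1 + r))) ^ (1 + r))
              - r * l * Real.log (∑ x, margX P x ^ (1 + 1 / l))
              - r * (1 + l) * E0} := by
  classical
  have hPX : ∀ x, 0 < margX P x := margX_pos P hPpos
  have hPXprob : IsProb (margX P) := margX_isProb P hP
  set U : Set ℝ := {u | ∃ QX : 𝒳 → ℝ, IsProb QX ∧ KL QX (margX P) ≤ E0 ∧
      u = (∑ x, QX x * Real.log (1 / margX P x)) - E0} with hU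
  set Rstar := sInf U with hRstar
  set L : Set ℝ := {v | ∃ Q : 𝒳 × 𝒴 → ℝ, IsProb Q ∧
      v = KL Q P + max (Rstar - condEnt Q) 0} with hL
  set R : Set ℝ := {v | ∃ r l : ℝ, 0 ≤ r ∧ r ≤ 1 ∧ 0 < l ∧
      v = -Real.log (∑ y, (∑ x, P (x, y) ^ (1 / (1 + r))) ^ (1 + r))
          - r * l * Real.log (∑ x, margX P x ^ (1 + 1 / l))
          - r * (1 + l) * E0} with hR
  show sInf L = sSup R
  -- basic facts about U and Rstar
  have hUne : U.Nonempty := by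
    refine ⟨(∑ x, margX P x * Real.log (1 / margX P x)) - E0, margX P, hPXprob, ?_, rfl⟩
    rw [KL_self (margX P) hPX]
    exact hE0.le
  have hUlb : ∀ u ∈ U, -1 * Real.log (bZ (margX P) (1/1)) - (1+1)*E0 ≤ u := by
    rintro u ⟨QX, hQX, hKL, rfl⟩
    exact weakB (margX P) hPX E0 1 one_pos QX hQX hKL
  have hUbdd : BddBelow U := ⟨_, hUlb⟩
  have hle_Rstar : ∀ l, 0 < l → -l * Real.log (bZ (margX P) (1/l)) - (1+l)*E0 ≤ Rstar := by
    intro l hl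
    refine le_csInf hUne ?_
    rintro u ⟨QX, hQX, hKL, rfl⟩
    exact weakB (margX P) hPX E0 l hl QX hQX hKL
  -- rewriting of elements of R
  have hRw : ∀ r l : ℝ,
      -Real.log (∑ y, (∑ x, P (x, y) ^ (1 / (1 + r))) ^ (1 + r))
        - r * l * Real.log (∑ x, margX P x ^ (1 + 1 / l))
        - r * (1 + l) * E0
      = -Real.log (tZ P r) + r * (-l * Real.log (bZ (margX P) (1/l)) - (1+l)*E0) := by
    intro r l
    rw [tZ_eq P hPpos r, bZ_rpow (margX P) hPX l]
    ring
  -- weak duality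
  have hWD : ∀ v ∈ L, ∀ w ∈ R, w ≤ v := by
    rintro v ⟨Q, hQ, rfl⟩ w ⟨r, l, hr0, hr1, hl, rfl⟩
    rw [hRw r l]
    have h1 : r * (-l * Real.log (bZ (margX P) (1/l)) - (1+l)*E0) ≤ r * Rstar :=
      mul_le_mul_of_nonneg_left (hle_Rstar l hl) hr0
    have h2 : -Real.log (tZ P r) ≤ KL Q P - r * condEnt Q := weakA P r hPpos hr0 Q hQ
    have h3 : r * (Rstar - condEnt Q) ≤ max (Rstar - condEnt Q) 0 := by
      rcases le_or_gt 0 (Rstar - condEnt Q) with h | h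
      · calc r * (Rstar - condEnt Q) ≤ 1 * (Rstar - condEnt Q) :=
            mul_le_mul_of_nonneg_right hr1 h
          _ = Rstar - condEnt Q := one_mul _
          _ ≤ max (Rstar - condEnt Q) 0 := le_max_left _ _
      · calc r * (Rstar - condEnt Q) ≤ 0 := mul_nonpos_of_nonneg_of_nonpos hr0 h.le
          _ ≤ max (Rstar - condEnt Q) 0 := le_max_right _ _
    nlinarith [h1, h2, h3]
  have hLne : L.Nonempty := ⟨_, P, hP, rfl⟩
  have hRmem0 : (0:ℝ) ∈ R := by
    refine ⟨0, 1, le_refl 0, zero_le_one, one_pos, ?_⟩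
    have h1 : ∑ y, (∑ x, P (x, y) ^ ((1:ℝ) / (1 + 0))) ^ ((1:ℝ) + 0) = 1 := by
      norm_num [Real.rpow_one]
      rw [show ∑ y, ∑ x, P (x, y) = ∑ y, margY P y from rfl, margY_sum_one P hP]
    rw [h1, Real.log_one]
    ring
  have hRne : R.Nonempty := ⟨0, hRmem0⟩
  have hRbdd : BddAbove R := by
    obtain ⟨v, hv⟩ := hLne
    exact ⟨v, fun w hw => hWD v hv w hw⟩
  have hLbdd : BddBelow L := by
    refine ⟨0, ?_⟩
    rintro v ⟨Q, hQ, rfl⟩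
    have hKL : 0 ≤ KL Q P := by
      have h := gibbs Q P hQ (fun p => (hPpos p).le) (fun p h => absurd h (hPpos p).ne')
        (by rw [hP.2]; exact one_pos)
      rw [hP.2, Real.log_one] at h
      rw [KL]
      linarith
    have := le_max_right (Rstar - condEnt Q) 0
    linarith
  -- strong duality for the rate part
  have hB : ∀ ε, 0 < ε → ∃ l, 0 < l ∧
      Rstar - ε ≤ -l * Real.log (bZ (margX P) (1/l)) - (1+l)*E0 := by
    intro ε hε
    by_cases hex : ∃ s, 0 < s ∧ KL (bQ (margX P) s) (margX P) = E0
    · obtain ⟨s, hs, hKLs⟩ := hex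
      refine ⟨1/s, by positivity, ?_⟩
      have hmem : (∑ x, bQ (margX P) s x * Real.log (1 / margX P x)) - E0 ∈ U :=
        ⟨bQ (margX P) s, bQ_isProb (margX P) s, le_of_eq hKLs, rfl⟩
      have h1 : Rstar ≤ (∑ x, bQ (margX P) s x * Real.log (1 / margX P x)) - E0 :=
        csInf_le hUbdd hmem
      have h2 := bQ_dual_eq (margX P) s hPX E0 hs hKLs
      rw [one_div_one_div]
      linarith [h1, h2.le, h2.ge]
    · push_neg at hex
      have hfeas : KL (bQm (margX P)) (margX P) ≤ E0 :=
        bQm_feasible (margX P) hPX hPXprob.2 E0 hE0 hex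
      have hmem : (∑ x, bQm (margX P) x * Real.log (1 / margX P x)) - E0 ∈ U :=
        ⟨bQm (margX P), bQm_isProb (margX P), hfeas, rfl⟩
      have h1 : Rstar ≤ -Real.log (pmax (margX P)) - E0 := by
        have := csInf_le hUbdd hmem
        rw [obj_bQm (margX P) hPX] at this
        exact this
      obtain ⟨l, hl, h2⟩ := dual_near (margX P) hPX E0 ε hε
      exact ⟨l, hl, by linarith⟩
  -- sSup lower bounds
  have hsup : ∀ r : ℝ, 0 ≤ r → r ≤ 1 → r * Rstar - Real.log (tZ P r) ≤ sSup R := by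
    intro r hr0 hr1
    refine le_of_forall_pos_le_add ?_
    intro ε hε
    obtain ⟨l, hl, hdual⟩ := hB ε hε
    have hmem : -Real.log (∑ y, (∑ x, P (x, y) ^ (1 / (1 + r))) ^ (1 + r))
        - r * l * Real.log (∑ x, margX P x ^ (1 + 1 / l))
        - r * (1 + l) * E0 ∈ R := ⟨r, l, hr0, hr1, hl, rfl⟩
    have h1 := le_csSup hRbdd hmem
    rw [hRw r l] at h1
    have h2 : r * (Rstar - ε) ≤ r * (-l * Real.log (bZ (margX P) (1/l)) - (1+l)*E0) :=
      mul_le_mul_of_nonneg_left hdual hr0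
    nlinarith [h1, h2, hε, hr1, hr0]
  -- conclude
  apply le_antisymm
  · -- sInf L ≤ sSup R, by cases
    by_cases hc1 : Rstar ≤ condEnt P
    · have hvP : KL P P + max (Rstar - condEnt P) 0 ∈ L := ⟨P, hP, rfl⟩
      have h1 : sInf L ≤ KL P P + max (Rstar - condEnt P) 0 := csInf_le hLbdd hvP
      rw [KL_self P hPpos, max_eq_right (sub_nonpos.2 hc1)] at h1
      have h2 : (0:ℝ) ≤ sSup R := le_csSup hRbdd hRmem0
      linarith
    · by_cases hc2 : condEnt (tQ P 1) ≤ Rstar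
      · have hv : KL (tQ P 1) P + max (Rstar - condEnt (tQ P 1)) 0 ∈ L :=
          ⟨tQ P 1, tQ_isProb P 1, rfl⟩
        have h1 := csInf_le hLbdd hv
        rw [max_eq_left (sub_nonneg.2 hc2), KL_tQ P 1 zero_le_one hPpos] at h1
        have h2 := hsup 1 zero_le_one (le_refl 1)
        calc sInf L ≤ 1 * condEnt (tQ P 1) - Real.log (tZ P 1)
              + (Rstar - condEnt (tQ P 1)) := h1
          _ = 1 * Rstar - Real.log (tZ P 1) := by ring
          _ ≤ sSup R := h2
      · push_neg at hc1 hc2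
        have hH0 : condEnt (tQ P 0) = condEnt P := by rw [tQ_zero P hP hPpos]
        have hmem : Rstar ∈ Set.Icc (condEnt (tQ P 0)) (condEnt (tQ P 1)) := by
          rw [hH0]
          exact ⟨hc1.le, hc2.le⟩
        obtain ⟨ρ, hρ, hρeq⟩ := intermediate_value_Icc zero_le_one
          (contCondEnt P hPpos) hmem
        have hρeq' : condEnt (tQ P ρ) = Rstar := hρeq
        have hv : KL (tQ P ρ) P + max (Rstar - condEnt (tQ P ρ)) 0 ∈ L :=
          ⟨tQ P ρ, tQ_isProb P ρ, rfl⟩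
        have h1 := csInf_le hLbdd hv
        rw [hρeq', sub_self, max_self, add_zero, KL_tQ P ρ hρ.1 hPpos, hρeq'] at h1
        calc sInf L ≤ ρ * Rstar - Real.log (tZ P ρ) := h1
          _ ≤ sSup R := hsup ρ hρ.1 hρ.2
  · exact csSup_le hRne fun w hw => le_csInf hLne fun v hv => hWD v hv w hw
end

section
/- Let P be a probability distribution on a nonempty finite set 𝒳 with P(x) > 0 for all x, and let H0 be any real number. Then the maximum over all probability distributions Q on 𝒳 of min{ H_Q(X), H0 − D(Q‖P) } equals the minimum over s ∈ [0,1] of { ln( Σ_x P(x)^s ) + s H0 }. -/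
open Finset

lemma gibbs_s11 {α : Type*} [Fintype α] [Nonempty α] (Q R : α → ℝ)
    (hQ0 : ∀ a, 0 ≤ Q a) (hQ1 : ∑ a, Q a = 1) (hR : ∀ a, 0 < R a) :
    ∑ a, Q a * Real.log (R a / Q a) ≤ Real.log (∑ a, R a) := by
  have hT : 0 < ∑ a, R a := Finset.sum_pos (fun a _ => hR a) univ_nonempty
  have key : ∀ a, Q a * Real.log (R a / Q a)
      ≤ R a / (∑ b, R b) - Q a + Q a * Real.log (∑ b, R b) := by
    intro a
    rcases eq_or_lt_of_le (hQ0 a) with h0 | h0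
    · rw [← h0]
      simp only [zero_mul, sub_zero, add_zero]
      exact div_nonneg (hR a).le hT.le
    · have harg : 0 < R a / (Q a * ∑ b, R b) := div_pos (hR a) (mul_pos h0 hT)
      have hlog : Real.log (R a / Q a)
          = Real.log (R a / (Q a * ∑ b, R b)) + Real.log (∑ b, R b) := by
        rw [← Real.log_mul harg.ne' hT.ne']
        congr 1
        field_simp
      rw [hlog, mul_add]
      have h2 : Real.log (R a / (Q a * ∑ b, R b)) ≤ R a / (Q a * ∑ b, R b) - 1 :=
        Real.log_le_sub_one_of_pos harg
      have h3 : Q a * Real.log (R a / (Q a * ∑ b, R b))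
          ≤ Q a * (R a / (Q a * ∑ b, R b) - 1) :=
        mul_le_mul_of_nonneg_left h2 h0.le
      have h4 : Q a * (R a / (Q a * ∑ b, R b) - 1) = R a / (∑ b, R b) - Q a := by
        field_simp
      linarith
  calc ∑ a, Q a * Real.log (R a / Q a)
      ≤ ∑ a, (R a / (∑ b, R b) - Q a + Q a * Real.log (∑ b, R b)) :=
        Finset.sum_le_sum (fun a _ => key a)
    _ = Real.log (∑ a, R a) := by
        rw [Finset.sum_add_distrib, Finset.sum_sub_distrib, ← Finset.sum_div,
          ← Finset.sum_mul, hQ1, div_self hT.ne', one_mul]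
        ring

lemma upper' {𝒳 : Type*} [Fintype 𝒳] [Nonempty 𝒳] (P Q : 𝒳 → ℝ) (hPpos : ∀ x, 0 < P x)
    (hQ0 : ∀ a, 0 ≤ Q a) (hQ1 : ∑ a, Q a = 1) (H0 s : ℝ) (hs0 : 0 ≤ s) (hs1 : s ≤ 1) :
    min (entropy Q) (H0 - KL Q P) ≤ Real.log (∑ x, P x ^ s) + s * H0 := by
  have h1 := min_le_left (entropy Q) (H0 - KL Q P)
  have h2 := min_le_right (entropy Q) (H0 - KL Q P)
  have step1 : min (entropy Q) (H0 - KL Q P)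
      ≤ (1 - s) * entropy Q + s * (H0 - KL Q P) := by nlinarith
  have step2 : (1 - s) * entropy Q - s * KL Q P
      = ∑ x, Q x * Real.log (P x ^ s / Q x) := by
    have expand : ∀ x, Q x * Real.log (P x ^ s / Q x)
        = -((1 - s) * (Q x * Real.log (Q x)) + s * (Q x * Real.log (Q x / P x))) := by
      intro x
      rcases eq_or_lt_of_le (hQ0 x) with h0 | h0
      · rw [← h0]; ring
      · rw [Real.log_div (Real.rpow_pos_of_pos (hPpos x) s).ne' h0.ne',
          Real.log_rpow (hPpos x), Real.log_div h0.ne' (hPpos x).ne']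
        ring
    calc (1 - s) * entropy Q - s * KL Q P
        = -∑ x, ((1 - s) * (Q x * Real.log (Q x)) + s * (Q x * Real.log (Q x / P x))) := by
          rw [entropy, KL, Finset.sum_add_distrib, ← Finset.mul_sum, ← Finset.mul_sum]; ring
      _ = ∑ x, Q x * Real.log (P x ^ s / Q x) := by
          rw [← Finset.sum_neg_distrib]
          exact Finset.sum_congr rfl fun x _ => (expand x).symm
  have step3 : ∑ x, Q x * Real.log (P x ^ s / Q x) ≤ Real.log (∑ x, P x ^ s) :=
    gibbs_s11 Q (fun x => P x ^ s) hQ0 hQ1 (fun x => Real.rpow_pos_of_pos (hPpos x) s)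
  calc min (entropy Q) (H0 - KL Q P) ≤ (1 - s) * entropy Q + s * (H0 - KL Q P) := step1
    _ = ((1 - s) * entropy Q - s * KL Q P) + s * H0 := by ring
    _ ≤ Real.log (∑ x, P x ^ s) + s * H0 := by rw [step2]; linarith

lemma tangent {𝒳 : Type*} [Fintype 𝒳] [Nonempty 𝒳] (P : 𝒳 → ℝ) (hPpos : ∀ x, 0 < P x)
    (s t : ℝ) :
    Real.log (∑ x, P x ^ t)
      + (s - t) * (∑ x, (P x ^ t / ∑ y, P y ^ t) * Real.log (P x))
      ≤ Real.log (∑ x, P x ^ s) := by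
  have hZt : (0:ℝ) < ∑ y, P y ^ t :=
    Finset.sum_pos (fun x _ => Real.rpow_pos_of_pos (hPpos x) t) univ_nonempty
  have hZs : (0:ℝ) < ∑ y, P y ^ s :=
    Finset.sum_pos (fun x _ => Real.rpow_pos_of_pos (hPpos x) s) univ_nonempty
  have jensen := convexOn_exp.map_sum_le (t := univ)
    (w := fun x => P x ^ t / ∑ y, P y ^ t)
    (p := fun x => (s - t) * Real.log (P x))
    (fun i _ => div_nonneg (Real.rpow_pos_of_pos (hPpos i) t).le hZt.le)
    (by rw [← Finset.sum_div, div_self hZt.ne'])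
    (fun i _ => Set.mem_univ _)
  simp only [smul_eq_mul] at jensen
  have hrhs : ∑ x, (P x ^ t / ∑ y, P y ^ t) * Real.exp ((s - t) * Real.log (P x))
      = (∑ y, P y ^ s) / (∑ y, P y ^ t) := by
    rw [Finset.sum_div]
    refine Finset.sum_congr rfl (fun x _ => ?_)
    rw [div_mul_eq_mul_div]
    congr 1
    rw [show Real.exp ((s - t) * Real.log (P x)) = P x ^ (s - t) by
        rw [Real.rpow_def_of_pos (hPpos x), mul_comm],
      ← Real.rpow_add (hPpos x)]
    ring_nf
  have hlhs : ∑ x, (P x ^ t / ∑ y, P y ^ t) * ((s - t) * Real.log (P x))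
      = (s - t) * ∑ x, (P x ^ t / ∑ y, P y ^ t) * Real.log (P x) := by
    rw [Finset.mul_sum]; refine Finset.sum_congr rfl (fun x _ => ?_); ring
  rw [hrhs, hlhs] at jensen
  have := Real.log_le_log (Real.exp_pos _) jensen
  rw [Real.log_exp, Real.log_div hZs.ne' hZt.ne'] at this
  linarith

section helpers
variable {𝒳 : Type*} [Fintype 𝒳] [Nonempty 𝒳] (P : 𝒳 → ℝ)

lemma Zpos (hPpos : ∀ x, 0 < P x) (t : ℝ) : (0:ℝ) < ∑ y, P y ^ t :=
  Finset.sum_pos (fun x _ => Real.rpow_pos_of_pos (hPpos x) t) univ_nonempty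

lemma isProb_Qd (hPpos : ∀ x, 0 < P x) (t : ℝ) : IsProb (fun x => P x ^ t / ∑ y, P y ^ t) := by
  refine ⟨fun x => div_nonneg (Real.rpow_pos_of_pos (hPpos x) t).le (Zpos P hPpos t).le, ?_⟩
  rw [← Finset.sum_div, div_self (Zpos P hPpos t).ne']

lemma log_Qd (hPpos : ∀ x, 0 < P x) (t : ℝ) (x : 𝒳) :
    Real.log (P x ^ t / ∑ y, P y ^ t)
      = t * Real.log (P x) - Real.log (∑ y, P y ^ t) := by
  rw [Real.log_div (Real.rpow_pos_of_pos (hPpos x) t).ne' (Zpos P hPpos t).ne',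
    Real.log_rpow (hPpos x)]

lemma ent_Qd (hPpos : ∀ x, 0 < P x) (t : ℝ) :
    entropy (fun x => P x ^ t / ∑ y, P y ^ t)
      = Real.log (∑ y, P y ^ t)
        - t * ∑ x, (P x ^ t / ∑ y, P y ^ t) * Real.log (P x) := by
  rw [entropy]
  have h : ∀ x ∈ univ, (P x ^ t / ∑ y, P y ^ t) * Real.log (P x ^ t / ∑ y, P y ^ t)
      = t * ((P x ^ t / ∑ y, P y ^ t) * Real.log (P x))
        - Real.log (∑ y, P y ^ t) * (P x ^ t / ∑ y, P y ^ t) := by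
    intro x _; rw [log_Qd P hPpos]; ring
  rw [Finset.sum_congr rfl h, Finset.sum_sub_distrib, ← Finset.mul_sum, ← Finset.mul_sum,
    (isProb_Qd P hPpos t).2]
  ring

lemma KL_Qd (hPpos : ∀ x, 0 < P x) (t : ℝ) :
    KL (fun x => P x ^ t / ∑ y, P y ^ t) P
      = (t - 1) * (∑ x, (P x ^ t / ∑ y, P y ^ t) * Real.log (P x))
        - Real.log (∑ y, P y ^ t) := by
  rw [KL]
  have h : ∀ x ∈ univ, (P x ^ t / ∑ y, P y ^ t) * Real.log ((P x ^ t / ∑ y, P y ^ t) / P x)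
      = (t - 1) * ((P x ^ t / ∑ y, P y ^ t) * Real.log (P x))
        - Real.log (∑ y, P y ^ t) * (P x ^ t / ∑ y, P y ^ t) := by
    intro x _
    rw [Real.log_div (div_pos (Real.rpow_pos_of_pos (hPpos x) t) (Zpos P hPpos t)).ne'
      (hPpos x).ne', log_Qd P hPpos]
    ring
  rw [Finset.sum_congr rfl h, Finset.sum_sub_distrib, ← Finset.mul_sum, ← Finset.mul_sum,
    (isProb_Qd P hPpos t).2]
  ring

lemma contA (hPpos : ∀ x, 0 < P x) : Continuous fun t : ℝ => ∑ x, (P x ^ t / ∑ y, P y ^ t) * Real.log (P x) := by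
  have hc : ∀ x : 𝒳, Continuous fun t : ℝ => P x ^ t := by
    intro x
    have he : (fun t : ℝ => P x ^ t) = fun t => Real.exp (Real.log (P x) * t) :=
      funext fun t => Real.rpow_def_of_pos (hPpos x) t
    rw [he]
    exact Real.continuous_exp.comp (continuous_const.mul continuous_id)
  have hZ : Continuous fun t : ℝ => ∑ y, P y ^ t :=
    continuous_finset_sum _ (fun y _ => hc y)
  refine continuous_finset_sum _ (fun x _ => ?_)
  exact ((hc x).div hZ (fun t => (Zpos P hPpos t).ne')).mul continuous_const

end helpers

/-- `max_Q min{H_Q(X), H0 - D(Q‖P)} = min_{0≤s≤1} {ln Σ_x P(x)^s + s H0}`. -/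
theorem stmt_11 {𝒳 : Type*} [Fintype 𝒳] [Nonempty 𝒳]
    (P : 𝒳 → ℝ) (hP : IsProb P) (hPpos : ∀ x, 0 < P x) (H0 : ℝ) :
    sSup {v | ∃ Q : 𝒳 → ℝ, IsProb Q ∧ v = min (entropy Q) (H0 - KL Q P)}
      = sInf {v | ∃ s : ℝ, 0 ≤ s ∧ s ≤ 1 ∧
          v = Real.log (∑ x, P x ^ s) + s * H0} := by
  classical
  set S : Set ℝ :=
    {v | ∃ Q : 𝒳 → ℝ, IsProb Q ∧ v = min (entropy Q) (H0 - KL Q P)} with hS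
  set T : Set ℝ :=
    {v | ∃ s : ℝ, 0 ≤ s ∧ s ≤ 1 ∧ v = Real.log (∑ x, P x ^ s) + s * H0} with hT
  -- the per-point quantities
  have key : ∀ t : ℝ, ∃ v : ℝ,
      v = min (entropy (fun x => P x ^ t / ∑ y, P y ^ t))
        (H0 - KL (fun x => P x ^ t / ∑ y, P y ^ t) P) := fun t => ⟨_, rfl⟩
  -- main existence of an optimal s0 with matching Q
  have main : ∃ s0 : ℝ, 0 ≤ s0 ∧ s0 ≤ 1 ∧
      (∃ Q : 𝒳 → ℝ, IsProb Q ∧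
        min (entropy Q) (H0 - KL Q P) = Real.log (∑ x, P x ^ s0) + s0 * H0) ∧
      (∀ s : ℝ, 0 ≤ s → s ≤ 1 →
        Real.log (∑ x, P x ^ s0) + s0 * H0 ≤ Real.log (∑ x, P x ^ s) + s * H0) := by
    set A : ℝ → ℝ := fun t => ∑ x, (P x ^ t / ∑ y, P y ^ t) * Real.log (P x) with hA
    by_cases hc0 : 0 ≤ A 0 + H0
    · -- s0 = 0
      refine ⟨0, le_refl 0, zero_le_one, ⟨fun x => P x ^ (0:ℝ) / ∑ y, P y ^ (0:ℝ),
        isProb_Qd P hPpos 0, ?_⟩, ?_⟩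
      · have he := ent_Qd P hPpos 0
        have hk := KL_Qd P hPpos 0
        have hc0' : 0 ≤ (∑ x, (P x ^ (0:ℝ) / ∑ y, P y ^ (0:ℝ)) * Real.log (P x)) + H0 := hc0
        have hmin : entropy (fun x => P x ^ (0:ℝ) / ∑ y, P y ^ (0:ℝ))
            ≤ H0 - KL (fun x => P x ^ (0:ℝ) / ∑ y, P y ^ (0:ℝ)) P := by
          rw [he, hk]; linarith
        rw [min_eq_left hmin, he]; ring
      · intro s hs0 hs1
        have ht := tangent P hPpos s 0
        have hc0' : 0 ≤ (∑ x, (P x ^ (0:ℝ) / ∑ y, P y ^ (0:ℝ)) * Real.log (P x)) + H0 := hc0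
        nlinarith [mul_nonneg hs0 hc0']
    · by_cases hc1 : A 1 + H0 ≤ 0
      · -- s0 = 1
        refine ⟨1, zero_le_one, le_refl 1, ⟨fun x => P x ^ (1:ℝ) / ∑ y, P y ^ (1:ℝ),
          isProb_Qd P hPpos 1, ?_⟩, ?_⟩
        · have he := ent_Qd P hPpos 1
          have hk := KL_Qd P hPpos 1
          have hc1' : (∑ x, (P x ^ (1:ℝ) / ∑ y, P y ^ (1:ℝ)) * Real.log (P x)) + H0 ≤ 0 := hc1
          have hmin : H0 - KL (fun x => P x ^ (1:ℝ) / ∑ y, P y ^ (1:ℝ)) P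
              ≤ entropy (fun x => P x ^ (1:ℝ) / ∑ y, P y ^ (1:ℝ)) := by
            rw [he, hk]; linarith
          rw [min_eq_right hmin, hk]; ring
        · intro s hs0 hs1
          have ht := tangent P hPpos s 1
          have hc1' : (∑ x, (P x ^ (1:ℝ) / ∑ y, P y ^ (1:ℝ)) * Real.log (P x)) + H0 ≤ 0 := hc1
          nlinarith [mul_nonneg (sub_nonneg.2 hs1) (neg_nonneg.2 hc1')]
      · -- interior: IVT
        push_neg at hc0 hc1
        have hcont : Continuous fun t : ℝ => A t + H0 := by
          rw [hA]; exact (contA P hPpos).add continuous_const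
        have hmem : (0:ℝ) ∈ Set.Icc ((fun t => A t + H0) 0) ((fun t => A t + H0) 1) :=
          ⟨hc0.le, hc1.le⟩
        obtain ⟨s0, hs0mem, hs0eq⟩ :=
          intermediate_value_Icc zero_le_one hcont.continuousOn hmem
        obtain ⟨hs00, hs01⟩ := hs0mem
        have hAs0 : A s0 = -H0 := by
          have : A s0 + H0 = 0 := hs0eq
          linarith
        refine ⟨s0, hs00, hs01, ⟨fun x => P x ^ s0 / ∑ y, P y ^ s0,
          isProb_Qd P hPpos s0, ?_⟩, ?_⟩
        · have he := ent_Qd P hPpos s0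
          have hk := KL_Qd P hPpos s0
          have hAs0' : (∑ x, (P x ^ s0 / ∑ y, P y ^ s0) * Real.log (P x)) = -H0 := hAs0
          have hmin : entropy (fun x => P x ^ s0 / ∑ y, P y ^ s0)
              ≤ H0 - KL (fun x => P x ^ s0 / ∑ y, P y ^ s0) P := by
            rw [he, hk, hAs0']; linarith
          rw [min_eq_left hmin, he, hAs0']; ring
        · intro s hs0 hs1
          have ht := tangent P hPpos s s0
          have hAs0' : (∑ x, (P x ^ s0 / ∑ y, P y ^ s0) * Real.log (P x)) = -H0 := hAs0
          rw [hAs0'] at ht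
          linarith
  obtain ⟨s0, hs00, hs01, ⟨Q0, hQ0prob, hQ0val⟩, hminopt⟩ := main
  have hST : ∀ v ∈ S, ∀ w ∈ T, v ≤ w := by
    rintro v ⟨Q, hQ, rfl⟩ w ⟨s, hsa, hsb, rfl⟩
    exact upper' P Q hPpos hQ.1 hQ.2 H0 s hsa hsb
  set v0 : ℝ := Real.log (∑ x, P x ^ s0) + s0 * H0 with hv0
  have hv0T : v0 ∈ T := ⟨s0, hs00, hs01, rfl⟩
  have hv0S : v0 ∈ S := ⟨Q0, hQ0prob, hQ0val.symm⟩
  have hSne : S.Nonempty := ⟨v0, hv0S⟩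
  have hTne : T.Nonempty := ⟨v0, hv0T⟩
  have hbddS : BddAbove S := ⟨v0, fun v hv => hST v hv v0 hv0T⟩
  have hbddT : BddBelow T := ⟨v0, fun w hw => hST v0 hv0S w hw⟩
  apply le_antisymm
  · refine csSup_le hSne (fun v hv => le_csInf hTne (fun w hw => hST v hv w hw))
  · exact (csInf_le hbddT hv0T).trans (le_csSup hbddS hv0S)
end
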